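/- Action of A_j on e_1 (Lemma 3.2 (i)). For every j ∈ {2,…,m} and every θ = (θ_2,…,θ_m) ∈ ℝ^{m−1}, one has A_j(θ) e_1 = ( ∏_{k=j+1}^{m} cos θ_k ) e_j, where the empty product (when j = m) equals 1. -/

import Mathlib

open Real

/-- The `m × m` rotation matrix rotating the plane spanned by the basis vectors
with indices `0` and `i` (the paper's `e_1` and `e_{i+1}`) by an angle `a`,
leaving all other directions invariant. -/
noncomputable def rotMat (m : ℕ) (i : ℕ) (a : ℝ) : Matrix (Fin m) (Fin m) ℝ :=
  Matrix.of fun k l =>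
    if (k : ℕ) = 0 ∧ (l : ℕ) = 0 then Real.cos a
    else if (k : ℕ) = 0 ∧ (l : ℕ) = i then -Real.sin a
    else if (k : ℕ) = i ∧ (l : ℕ) = 0 then Real.sin a
    else if (k : ℕ) = i ∧ (l : ℕ) = i then Real.cos a
    else if k = l then 1 else 0

/-- `R_θ = R_2(θ_2) R_3(θ_3) ⋯ R_m(θ_m)`.  Here the paper's basis vector `e_j`
(`j ∈ {1,…,m}`) is the Lean basis vector with index `j - 1 : Fin m`, so the
paper's rotation `R_j(θ_j)` of the `(e_1, e_j)`-plane is `rotMat m (j-1) (θ j)`.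
Only the values `θ 2, …, θ m` of `θ : ℕ → ℝ` are relevant. -/
noncomputable def Rtheta (m : ℕ) (θ : ℕ → ℝ) : Matrix (Fin m) (Fin m) ℝ :=
  ((List.range (m - 1)).map fun k => rotMat m (k + 1) (θ (k + 2))).prod

/-- The entrywise partial derivative `∂R_θ/∂θ_j`. -/
noncomputable def dRtheta (m : ℕ) (θ : ℕ → ℝ) (j : ℕ) : Matrix (Fin m) (Fin m) ℝ :=
  Matrix.of fun k l => deriv (fun a => Rtheta m (Function.update θ j a) k l) (θ j)

/-- `A_j(θ) = R_θ⁻¹ ∂R_θ/∂θ_j`. -/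
noncomputable def Amat (m : ℕ) (θ : ℕ → ℝ) (j : ℕ) : Matrix (Fin m) (Fin m) ℝ :=
  (Rtheta m θ)⁻¹ * dRtheta m θ j

noncomputable def rotMat' (m : ℕ) (i : ℕ) (a : ℝ) : Matrix (Fin m) (Fin m) ℝ :=
  Matrix.of fun k l =>
    if (k : ℕ) = 0 ∧ (l : ℕ) = 0 then -Real.sin a
    else if (k : ℕ) = 0 ∧ (l : ℕ) = i then -Real.cos a
    else if (k : ℕ) = i ∧ (l : ℕ) = 0 then Real.cos a
    else if (k : ℕ) = i ∧ (l : ℕ) = i then -Real.sin a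
    else 0

private lemma sum_two {α : Type*} [Fintype α] [DecidableEq α] {x y : α} (hxy : x ≠ y)
    (cx cy : ℝ) (v : α → ℝ) :
    (∑ p, (if p = x then cx else if p = y then cy else 0) * v p) = cx * v x + cy * v y := by
  have h : ∀ p, (if p = x then cx else if p = y then cy else 0) * v p
      = (if p = x then cx * v p else 0) + (if p = y then cy * v p else 0) := by
    intro p
    by_cases h1 : p = x
    · subst h1; simp [hxy]
    · by_cases h2 : p = y
      · subst h2; simp [h1, Ne.symm hxy]
      · simp [h1, h2]
  simp only [h, Finset.sum_add_distrib, Finset.sum_ite_eq', Finset.mem_univ, if_true]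

private lemma rot_entry_row0 (m i : ℕ) (him : i < m) (a : ℝ) (r q : Fin m) (hr0 : (r : ℕ) = 0) :
    rotMat m i a r q
      = (if q = (⟨0, by omega⟩ : Fin m) then Real.cos a
          else if q = ⟨i, him⟩ then -Real.sin a else 0) := by
  simp only [rotMat, Matrix.of_apply]
  simp only [show (q = (⟨0, by omega⟩ : Fin m)) ↔ (q : ℕ) = 0 from by simp [Fin.ext_iff],
    show (q = (⟨i, him⟩ : Fin m)) ↔ (q : ℕ) = i from by simp [Fin.ext_iff], Fin.ext_iff]
  split_ifs <;> first | rfl | (exfalso; omega)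

private lemma rot_entry_rowi (m i : ℕ) (hi0 : 0 < i) (him : i < m) (a : ℝ) (r q : Fin m)
    (hri : (r : ℕ) = i) :
    rotMat m i a r q
      = (if q = (⟨0, by omega⟩ : Fin m) then Real.sin a
          else if q = ⟨i, him⟩ then Real.cos a else 0) := by
  simp only [rotMat, Matrix.of_apply]
  simp only [show (q = (⟨0, by omega⟩ : Fin m)) ↔ (q : ℕ) = 0 from by simp [Fin.ext_iff],
    show (q = (⟨i, him⟩ : Fin m)) ↔ (q : ℕ) = i from by simp [Fin.ext_iff], Fin.ext_iff]
  split_ifs <;> first | rfl | (exfalso; omega)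

private lemma rot_entry_other (m i : ℕ) (a : ℝ) (r q : Fin m)
    (hr0 : ¬ (r : ℕ) = 0) (hri : ¬ (r : ℕ) = i) :
    rotMat m i a r q = (if q = r then 1 else 0) := by
  simp only [rotMat, Matrix.of_apply, Fin.ext_iff]
  split_ifs <;> first | rfl | (exfalso; omega)

private lemma rot'_entry_row0 (m i : ℕ) (him : i < m) (a : ℝ) (r q : Fin m) (hr0 : (r : ℕ) = 0) :
    rotMat' m i a r q
      = (if q = (⟨0, by omega⟩ : Fin m) then -Real.sin a
          else if q = ⟨i, him⟩ then -Real.cos a else 0) := by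
  simp only [rotMat', Matrix.of_apply]
  simp only [show (q = (⟨0, by omega⟩ : Fin m)) ↔ (q : ℕ) = 0 from by simp [Fin.ext_iff],
    show (q = (⟨i, him⟩ : Fin m)) ↔ (q : ℕ) = i from by simp [Fin.ext_iff], Fin.ext_iff]
  split_ifs <;> first | rfl | (exfalso; omega)

private lemma rot'_entry_rowi (m i : ℕ) (hi0 : 0 < i) (him : i < m) (a : ℝ) (r q : Fin m)
    (hri : (r : ℕ) = i) :
    rotMat' m i a r q
      = (if q = (⟨0, by omega⟩ : Fin m) then Real.cos a
          else if q = ⟨i, him⟩ then -Real.sin a else 0) := by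
  simp only [rotMat', Matrix.of_apply]
  simp only [show (q = (⟨0, by omega⟩ : Fin m)) ↔ (q : ℕ) = 0 from by simp [Fin.ext_iff],
    show (q = (⟨i, him⟩ : Fin m)) ↔ (q : ℕ) = i from by simp [Fin.ext_iff], Fin.ext_iff]
  split_ifs <;> first | rfl | (exfalso; omega)

private lemma rot'_entry_other (m i : ℕ) (a : ℝ) (r q : Fin m)
    (hr0 : ¬ (r : ℕ) = 0) (hri : ¬ (r : ℕ) = i) :
    rotMat' m i a r q = 0 := by
  simp only [rotMat', Matrix.of_apply]
  split_ifs <;> first | rfl | (exfalso; omega)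

lemma rotMat_mulVec (m i : ℕ) (hi0 : 0 < i) (him : i < m) (a : ℝ) (v : Fin m → ℝ) :
    (rotMat m i a).mulVec v = fun r : Fin m =>
      if (r : ℕ) = 0 then Real.cos a * v ⟨0, by omega⟩ - Real.sin a * v ⟨i, him⟩
      else if (r : ℕ) = i then Real.sin a * v ⟨0, by omega⟩ + Real.cos a * v ⟨i, him⟩
      else v r := by
  have hxy : (⟨0, by omega⟩ : Fin m) ≠ ⟨i, him⟩ := by simp [Fin.ext_iff]; omega
  funext r
  show ∑ q, rotMat m i a r q * v q = _
  by_cases hr0 : (r : ℕ) = 0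
  · simp only [fun q => rot_entry_row0 m i him a r q hr0, sum_two hxy, hr0, if_true]
    ring
  · by_cases hri : (r : ℕ) = i
    · simp only [fun q => rot_entry_rowi m i hi0 him a r q hri, sum_two hxy, hr0, hri,
        if_false, if_true]
      rw [if_neg hi0.ne']
    · simp only [fun q => rot_entry_other m i a r q hr0 hri, ite_mul, one_mul, zero_mul,
        Finset.sum_ite_eq', Finset.mem_univ, if_true, hr0, hri, if_false]

lemma rotMat'_mulVec (m i : ℕ) (hi0 : 0 < i) (him : i < m) (a : ℝ) (v : Fin m → ℝ) :
    (rotMat' m i a).mulVec v = fun r : Fin m =>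
      if (r : ℕ) = 0 then -Real.sin a * v ⟨0, by omega⟩ - Real.cos a * v ⟨i, him⟩
      else if (r : ℕ) = i then Real.cos a * v ⟨0, by omega⟩ - Real.sin a * v ⟨i, him⟩
      else 0 := by
  have hxy : (⟨0, by omega⟩ : Fin m) ≠ ⟨i, him⟩ := by simp [Fin.ext_iff]; omega
  funext r
  show ∑ q, rotMat' m i a r q * v q = _
  by_cases hr0 : (r : ℕ) = 0
  · simp only [fun q => rot'_entry_row0 m i him a r q hr0, sum_two hxy, hr0, if_true]
    ring
  · by_cases hri : (r : ℕ) = i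
    · simp only [fun q => rot'_entry_rowi m i hi0 him a r q hri, sum_two hxy, hr0, hri,
        if_false, if_true]
      rw [if_neg hi0.ne']
      ring
    · simp [fun q => rot'_entry_other m i a r q hr0 hri, hr0, hri]


lemma rotMat_mulVec_zero (m i : ℕ) (hi0 : 0 < i) (him : i < m) (a : ℝ) (v : Fin m → ℝ)
    (h0 : 0 < m) :
    ((rotMat m i a).mulVec v) ⟨0, h0⟩
      = Real.cos a * v ⟨0, h0⟩ - Real.sin a * v ⟨i, him⟩ := by
  have h := congrFun (rotMat_mulVec m i hi0 him a v) ⟨0, h0⟩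
  simpa using h

lemma rotMat_mulVec_other (m i : ℕ) (hi0 : 0 < i) (him : i < m) (a : ℝ) (v : Fin m → ℝ)
    (r : Fin m) (hr0 : ¬ (r : ℕ) = 0) (hri : ¬ (r : ℕ) = i) :
    ((rotMat m i a).mulVec v) r = v r := by
  have h := congrFun (rotMat_mulVec m i hi0 him a v) r
  simpa [hr0, hri] using h

lemma rotMat_mulVec_i (m i : ℕ) (hi0 : 0 < i) (him : i < m) (a : ℝ) (v : Fin m → ℝ)
    (h0 : 0 < m) :
    ((rotMat m i a).mulVec v) ⟨i, him⟩
      = Real.sin a * v ⟨0, h0⟩ + Real.cos a * v ⟨i, him⟩ := by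
  have h := congrFun (rotMat_mulVec m i hi0 him a v) ⟨i, him⟩
  simpa [hi0.ne'] using h

lemma rotMat'_mulVec_zero (m i : ℕ) (hi0 : 0 < i) (him : i < m) (a : ℝ) (v : Fin m → ℝ)
    (h0 : 0 < m) :
    ((rotMat' m i a).mulVec v) ⟨0, h0⟩
      = -Real.sin a * v ⟨0, h0⟩ - Real.cos a * v ⟨i, him⟩ := by
  have h := congrFun (rotMat'_mulVec m i hi0 him a v) ⟨0, h0⟩
  simpa using h

lemma rotMat'_mulVec_other (m i : ℕ) (hi0 : 0 < i) (him : i < m) (a : ℝ) (v : Fin m → ℝ)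
    (r : Fin m) (hr0 : ¬ (r : ℕ) = 0) (hri : ¬ (r : ℕ) = i) :
    ((rotMat' m i a).mulVec v) r = 0 := by
  have h := congrFun (rotMat'_mulVec m i hi0 him a v) r
  simpa [hr0, hri] using h

lemma rotMat'_mulVec_i (m i : ℕ) (hi0 : 0 < i) (him : i < m) (a : ℝ) (v : Fin m → ℝ)
    (h0 : 0 < m) :
    ((rotMat' m i a).mulVec v) ⟨i, him⟩
      = Real.cos a * v ⟨0, h0⟩ - Real.sin a * v ⟨i, him⟩ := by
  have h := congrFun (rotMat'_mulVec m i hi0 him a v) ⟨i, him⟩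
  simpa [hi0.ne'] using h

private lemma rot_decomp (m i : ℕ) (hi0 : 0 < i) (him : i < m) (a : ℝ) :
    rotMat m i a
      = 1 + (Real.cos a - 1) • (Matrix.single (⟨0, by omega⟩ : Fin m) ⟨0, by omega⟩ (1:ℝ)
              + Matrix.single (⟨i, him⟩ : Fin m) ⟨i, him⟩ 1)
          + Real.sin a • (Matrix.single (⟨i, him⟩ : Fin m) (⟨0, by omega⟩ : Fin m) (1:ℝ)
              - Matrix.single (⟨0, by omega⟩ : Fin m) (⟨i, him⟩ : Fin m) 1) := by
  ext k l
  simp only [rotMat, Matrix.of_apply, Matrix.add_apply, Matrix.smul_apply, Matrix.one_apply,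
    Matrix.single, Matrix.sub_apply, smul_eq_mul, Matrix.of_apply]
  simp only [Fin.ext_iff]
  split_ifs <;> first | (exfalso; omega) | ring

private lemma rot_mul_rot_neg (m i : ℕ) (hi0 : 0 < i) (him : i < m) (a : ℝ) :
    rotMat m i a * rotMat m i (-a) = 1 := by
  have hxy : (⟨0, by omega⟩ : Fin m) ≠ ⟨i, him⟩ := by simp [Fin.ext_iff]; omega
  rw [rot_decomp m i hi0 him a, rot_decomp m i hi0 him (-a), Real.cos_neg, Real.sin_neg]
  set x : Fin m := ⟨0, by omega⟩ with hx
  set y : Fin m := ⟨i, him⟩ with hy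
  set D : Matrix (Fin m) (Fin m) ℝ :=
    Matrix.single x x 1 + Matrix.single y y 1 with hD
  set S : Matrix (Fin m) (Fin m) ℝ :=
    Matrix.single y x 1 - Matrix.single x y 1 with hS
  have hDD : D * D = D := by
    simp [hD, add_mul, mul_add, Matrix.single_mul_single_same,
      (fun (i l : Fin m) => (Matrix.single_mul_single_of_ne (1:ℝ) i x y hxy 1 : Matrix.single i x (1:ℝ) * Matrix.single y l 1 = 0)), (fun (i l : Fin m) => (Matrix.single_mul_single_of_ne (1:ℝ) i y x hxy.symm 1 : Matrix.single i y (1:ℝ) * Matrix.single x l 1 = 0))]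
  have hSS : S * S = -D := by
    simp only [hS, hD, sub_mul, mul_sub, Matrix.single_mul_single_same,
      (fun (i l : Fin m) => (Matrix.single_mul_single_of_ne (1:ℝ) i x y hxy 1 : Matrix.single i x (1:ℝ) * Matrix.single y l 1 = 0)), (fun (i l : Fin m) => (Matrix.single_mul_single_of_ne (1:ℝ) i y x hxy.symm 1 : Matrix.single i y (1:ℝ) * Matrix.single x l 1 = 0)),
      mul_one]
    abel
  have hSD : S * D = S := by
    simp only [hS, hD, sub_mul, mul_add, Matrix.single_mul_single_same,
      (fun (i l : Fin m) => (Matrix.single_mul_single_of_ne (1:ℝ) i x y hxy 1 : Matrix.single i x (1:ℝ) * Matrix.single y l 1 = 0)), (fun (i l : Fin m) => (Matrix.single_mul_single_of_ne (1:ℝ) i y x hxy.symm 1 : Matrix.single i y (1:ℝ) * Matrix.single x l 1 = 0)),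
      mul_one]
    abel
  set M1 : Matrix (Fin m) (Fin m) ℝ := 1 + (Real.cos a - 1) • D + (Real.sin a) • S with hM1
  have e1 : M1 * D = D + (Real.cos a - 1) • D + (Real.sin a) • S := by
    rw [hM1, add_mul, add_mul, one_mul, smul_mul_assoc, smul_mul_assoc, hDD, hSD]
  have e2 : M1 * S = S + (Real.cos a - 1) • S + (Real.sin a) • (-D) := by
    rw [hM1, add_mul, add_mul, one_mul, smul_mul_assoc, smul_mul_assoc, hSS]
    have hDS : D * S = S := by
      simp only [hS, hD, add_mul, mul_sub, Matrix.single_mul_single_same,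
        (fun (i l : Fin m) => (Matrix.single_mul_single_of_ne (1:ℝ) i x y hxy 1 : Matrix.single i x (1:ℝ) * Matrix.single y l 1 = 0)), (fun (i l : Fin m) => (Matrix.single_mul_single_of_ne (1:ℝ) i y x hxy.symm 1 : Matrix.single i y (1:ℝ) * Matrix.single x l 1 = 0)),
        mul_one]
      abel
    rw [hDS]
  have expand : M1 * (1 + (Real.cos a - 1) • D + (-(Real.sin a)) • S)
      = M1 + (Real.cos a - 1) • (M1 * D) + (-(Real.sin a)) • (M1 * S) := by
    rw [mul_add, mul_add, mul_one, mul_smul_comm, mul_smul_comm]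
  show M1 * (1 + (Real.cos a - 1) • D + (-(Real.sin a)) • S) = 1
  rw [expand, e1, e2, hM1]
  match_scalars <;>
    first
      | linear_combination (sin_sq_add_cos_sq a)
      | linear_combination (2 * sin_sq_add_cos_sq a)
      | linear_combination

private lemma isUnit_rotMat (m i : ℕ) (hi0 : 0 < i) (him : i < m) (a : ℝ) :
    IsUnit (rotMat m i a) := by
  refine ⟨⟨rotMat m i a, rotMat m i (-a), rot_mul_rot_neg m i hi0 him a, ?_⟩, rfl⟩
  have := rot_mul_rot_neg m i hi0 him (-a)
  rwa [neg_neg] at this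

private lemma hasDerivAt_rotMat (m i : ℕ) (k l : Fin m) (a : ℝ) :
    HasDerivAt (fun b => rotMat m i b k l) (rotMat' m i a k l) a := by
  simp only [rotMat, rotMat', Matrix.of_apply]
  split_ifs
  · exact Real.hasDerivAt_cos a
  · exact (Real.hasDerivAt_sin a).neg
  · exact Real.hasDerivAt_sin a
  · exact Real.hasDerivAt_cos a
  · exact hasDerivAt_const a 1
  · exact hasDerivAt_const a 0

private lemma hasDerivAt_triple (m i : ℕ) (P Q : Matrix (Fin m) (Fin m) ℝ) (k l : Fin m) (a : ℝ) :
    HasDerivAt (fun b => (P * rotMat m i b * Q) k l) ((P * rotMat' m i a * Q) k l) a := by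
  simp only [Matrix.mul_apply]
  refine HasDerivAt.fun_sum fun q _ => ?_
  refine HasDerivAt.mul_const ?_ _
  exact HasDerivAt.fun_sum fun p _ => (hasDerivAt_rotMat m i p q a).const_mul (P k p)

private lemma Rtheta_split (m j : ℕ) (hm : 2 ≤ m) (hj2 : 2 ≤ j) (hjm : j ≤ m) (η : ℕ → ℝ) :
    Rtheta m η
      = ((List.range' 0 (j-2)).map fun k => rotMat m (k+1) (η (k+2))).prod
        * rotMat m (j-1) (η j)
        * ((List.range' (j-1) (m-j)).map fun k => rotMat m (k+1) (η (k+2))).prod := by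
  have h1 : List.range' 0 (m-1) = List.range' 0 (j-2) ++ List.range' (j-2) ((m-j)+1) := by
    rw [show m - 1 = (j-2) + ((m-j)+1) by omega, ← List.range'_append (s := 0) (m := j-2) (n := (m-j)+1) (step := 1)]
    norm_num
  have h2 : List.range' (j-2) ((m-j)+1) = (j-2) :: List.range' (j-1) (m-j) := by
    rw [List.range'_succ, show j-2+1 = j-1 by omega]
  rw [Rtheta, List.range_eq_range', h1, h2, List.map_append, List.map_cons, List.prod_append,
    List.prod_cons, show j-2+1 = j-1 by omega, show j-2+2 = j by omega, mul_assoc]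

private lemma prodRot_mulVec_e0 (m : ℕ) (hm : 0 < m) (θ : ℕ → ℝ) :
    ∀ (t s : ℕ), s + t ≤ m - 1 →
      (((((List.range' s t).map fun k => rotMat m (k+1) (θ (k+2))).prod).mulVec
          (Pi.single (⟨0, hm⟩ : Fin m) 1)) ⟨0, hm⟩
        = ((List.range' s t).map fun k => Real.cos (θ (k+2))).prod)
      ∧ ∀ q : Fin m, 0 < (q : ℕ) → (q : ℕ) ≤ s →
          ((((List.range' s t).map fun k => rotMat m (k+1) (θ (k+2))).prod).mulVec
            (Pi.single (⟨0, hm⟩ : Fin m) 1)) q = 0 := by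
  intro t
  induction t with
  | zero =>
      intro s _
      simp only [List.range'_zero, List.map_nil, List.prod_nil, Matrix.one_mulVec]
      constructor
      · simp
      · intro q hq0 _
        have hq : q ≠ (⟨0, hm⟩ : Fin m) := by simp [Fin.ext_iff]; omega
        exact Pi.single_eq_of_ne (M := fun _ => ℝ) hq 1
  | succ t ih =>
      intro s hs
      have hsm : s + 1 < m := by omega
      have ihs := ih (s+1) (by omega)
      rw [List.range'_succ, List.map_cons, List.prod_cons, List.map_cons, List.prod_cons,
        ← Matrix.mulVec_mulVec]
      set v := ((((List.range' (s+1) t).map fun k => rotMat m (k+1) (θ (k+2))).prod).mulVec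
        (Pi.single (⟨0, hm⟩ : Fin m) 1)) with hv
      constructor
      · rw [rotMat_mulVec_zero m (s+1) (by omega) hsm _ _ hm,
          ihs.2 ⟨s+1, hsm⟩ (by simp) (by simp), ihs.1]
        ring
      · intro q hq0 hqs
        rw [rotMat_mulVec_other m (s+1) (by omega) hsm _ _ q (by omega) (by omega)]
        exact ihs.2 q hq0 (by omega)

private lemma prodRot_fix (m : ℕ) (θ : ℕ → ℝ) (y : Fin m) (c : ℝ) (hy0 : 0 < (y : ℕ)) :
    ∀ (t s : ℕ), (y : ℕ) ≤ s → s + t ≤ m - 1 →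
      ((((List.range' s t).map fun k => rotMat m (k+1) (θ (k+2))).prod).mulVec
        (Pi.single y c)) = Pi.single y c := by
  have hym : (y : ℕ) < m := y.2
  intro t
  induction t with
  | zero =>
      intro s _ _
      simp only [List.range'_zero, List.map_nil, List.prod_nil, Matrix.one_mulVec]
  | succ t ih =>
      intro s hys hs
      have hsm : s + 1 < m := by omega
      have hm : 0 < m := by omega
      rw [List.range'_succ, List.map_cons, List.prod_cons, ← Matrix.mulVec_mulVec,
        ih (s+1) (by omega) (by omega)]
      have hne1 : (⟨0, hm⟩ : Fin m) ≠ y := by simp [Fin.ext_iff]; omega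
      have h1 : (Pi.single y c : Fin m → ℝ) ⟨0, hm⟩ = 0 := Pi.single_eq_of_ne (M := fun _ => ℝ) hne1 c
      have hne2 : (⟨s+1, hsm⟩ : Fin m) ≠ y := by simp [Fin.ext_iff]; omega
      have h2 : (Pi.single y c : Fin m → ℝ) ⟨s+1, hsm⟩ = 0 := Pi.single_eq_of_ne (M := fun _ => ℝ) hne2 c
      funext r
      by_cases hr0 : (r : ℕ) = 0
      · have hner : r ≠ y := by simp [Fin.ext_iff]; omega
        have hry : (Pi.single y c : Fin m → ℝ) r = 0 := Pi.single_eq_of_ne (M := fun _ => ℝ) hner c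
        have : r = (⟨0, hm⟩ : Fin m) := by simp [Fin.ext_iff, hr0]
        rw [this] at hry ⊢
        rw [rotMat_mulVec_zero m (s+1) (by omega) hsm _ _ hm, h1, h2]
        ring
      · by_cases hri : (r : ℕ) = s + 1
        · have hner : r ≠ y := by simp [Fin.ext_iff]; omega
          have hry : (Pi.single y c : Fin m → ℝ) r = 0 := Pi.single_eq_of_ne (M := fun _ => ℝ) hner c
          have : r = (⟨s+1, hsm⟩ : Fin m) := by simp [Fin.ext_iff, hri]
          rw [this] at hry ⊢
          rw [rotMat_mulVec_i m (s+1) (by omega) hsm _ _ hm, h1, h2]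
          ring
        · rw [rotMat_mulVec_other m (s+1) (by omega) hsm _ _ r hr0 hri]

private lemma prod_cos_list (θ : ℕ → ℝ) (s : ℕ) :
    ∀ t : ℕ, ((List.range' s t).map fun k => Real.cos (θ (k+2))).prod
      = ∏ k ∈ Finset.Icc (s+2) (s+t+1), Real.cos (θ k) := by
  intro t
  induction t with
  | zero => simp [Finset.Icc_eq_empty (by omega : ¬ (s+2 ≤ s+0+1))]
  | succ t ih =>
      rw [List.range'_concat, List.map_append, List.prod_append,
        show s + (t+1) + 1 = (s+t+1) + 1 by omega,
        Finset.prod_Icc_succ_top (by omega : s+2 ≤ (s+t+1)+1), ← ih]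
      simp only [List.map_cons, List.map_nil, List.prod_cons, List.prod_nil, mul_one]
      rw [show s + 1 * t = s + t by omega, show s + t + 1 + 1 = s + t + 2 by omega]

/-- **Action of `A_j` on `e_1`** (Lemma 3.2 (i)): for `j ∈ {2,…,m}`,
`A_j(θ) e_1 = (∏_{k=j+1}^m cos θ_k) e_j`.  In Lean the paper's `e_1` is
`Pi.single 0 1` and its `e_j` is `Pi.single ⟨j-1,_⟩ 1`. -/
theorem Amat_mulVec_e1 (m : ℕ) (hm : 2 ≤ m) (θ : ℕ → ℝ)
    (j : ℕ) (hj2 : 2 ≤ j) (hjm : j ≤ m) :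
    (Amat m θ j).mulVec (Pi.single (⟨0, by omega⟩ : Fin m) 1) =
      (∏ k ∈ Finset.Icc (j + 1) m, Real.cos (θ k)) •
        (Pi.single (⟨j - 1, by omega⟩ : Fin m) (1 : ℝ) : Fin m → ℝ) := by
  have hm0 : 0 < m := by omega
  have hym : j - 1 < m := by omega
  have hj10 : 0 < j - 1 := by omega
  set P := ((List.range' 0 (j-2)).map fun k => rotMat m (k+1) (θ (k+2))).prod with hP
  set Q := ((List.range' (j-1) (m-j)).map fun k => rotMat m (k+1) (θ (k+2))).prod with hQ
  have hsplit : ∀ a : ℝ, Rtheta m (Function.update θ j a) = P * rotMat m (j-1) a * Q := by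
    intro a
    rw [Rtheta_split m j hm hj2 hjm (Function.update θ j a), Function.update_self]
    have hPe : ((List.range' 0 (j-2)).map
        fun k => rotMat m (k+1) (Function.update θ j a (k+2))).prod = P := by
      rw [hP]
      congr 1
      apply List.map_congr_left
      intro k hk
      rw [List.mem_range'_1] at hk
      rw [Function.update_of_ne (by omega)]
    have hQe : ((List.range' (j-1) (m-j)).map
        fun k => rotMat m (k+1) (Function.update θ j a (k+2))).prod = Q := by
      rw [hQ]
      congr 1
      apply List.map_congr_left
      intro k hk
      rw [List.mem_range'_1] at hk
      rw [Function.update_of_ne (by omega)]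
    rw [hPe, hQe]
  have hR : Rtheta m θ = P * rotMat m (j-1) (θ j) * Q := by
    have h := hsplit (θ j)
    rwa [Function.update_eq_self] at h
  have hdR : dRtheta m θ j = P * rotMat' m (j-1) (θ j) * Q := by
    ext k l
    show deriv (fun a => Rtheta m (Function.update θ j a) k l) (θ j) = _
    have hfun : (fun a => Rtheta m (Function.update θ j a) k l)
        = fun a => (P * rotMat m (j-1) a * Q) k l := by
      funext a; rw [hsplit a]
    rw [hfun]
    exact (hasDerivAt_triple m (j-1) P Q k l (θ j)).deriv
  obtain ⟨hv0, hvz⟩ := prodRot_mulVec_e0 m hm0 θ (m-j) (j-1) (by omega)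
  rw [← hQ] at hv0
  have hvy : (Q.mulVec (Pi.single (⟨0, hm0⟩ : Fin m) 1)) ⟨j-1, hym⟩ = 0 := by
    have h := hvz ⟨j-1, hym⟩ (by exact hj10) (by exact le_refl (j-1))
    rwa [← hQ] at h
  set c := ∏ k ∈ Finset.Icc (j + 1) m, Real.cos (θ k) with hcdef
  have hc : (Q.mulVec (Pi.single (⟨0, hm0⟩ : Fin m) 1)) ⟨0, hm0⟩ = c := by
    rw [hv0, prod_cos_list θ (j-1) (m-j), show j-1+2 = j+1 by omega,
      show j-1+(m-j)+1 = m by omega]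
  have hsingle : c • (Pi.single (⟨j-1, hym⟩ : Fin m) (1:ℝ) : Fin m → ℝ)
      = Pi.single (⟨j-1, hym⟩ : Fin m) c := by
    funext r
    by_cases hr : r = ⟨j-1, hym⟩
    · subst hr; simp
    · rw [Pi.smul_apply, Pi.single_eq_of_ne (M := fun _ => ℝ) hr,
        Pi.single_eq_of_ne (M := fun _ => ℝ) hr]
      simp
  have hQfix : Q.mulVec (Pi.single (⟨j-1, hym⟩ : Fin m) c)
      = Pi.single (⟨j-1, hym⟩ : Fin m) c :=
    prodRot_fix m θ ⟨j-1, hym⟩ c (by exact hj10) (m-j) (j-1) (by exact le_refl (j-1))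
      (by omega)
  have hy0ne : (⟨0, hm0⟩ : Fin m) ≠ ⟨j-1, hym⟩ := by simp [Fin.ext_iff]; omega
  have hs0 : (Pi.single (⟨j-1, hym⟩ : Fin m) c : Fin m → ℝ) ⟨0, hm0⟩ = 0 :=
    Pi.single_eq_of_ne (M := fun _ => ℝ) hy0ne c
  have hsy : (Pi.single (⟨j-1, hym⟩ : Fin m) c : Fin m → ℝ) ⟨j-1, hym⟩ = c :=
    Pi.single_eq_same (M := fun _ => ℝ) _ _
  have key : (dRtheta m θ j).mulVec (Pi.single (⟨0, hm0⟩ : Fin m) 1)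
      = (Rtheta m θ).mulVec (Pi.single (⟨j-1, hym⟩ : Fin m) c) := by
    rw [hdR, hR]
    simp only [← Matrix.mulVec_mulVec]
    rw [hQfix]
    have harg : (rotMat' m (j-1) (θ j)).mulVec (Q.mulVec (Pi.single (⟨0, hm0⟩ : Fin m) 1))
        = (rotMat m (j-1) (θ j)).mulVec (Pi.single (⟨j-1, hym⟩ : Fin m) c) := by
      funext r
      by_cases hr0 : (r : ℕ) = 0
      · have hre : r = (⟨0, hm0⟩ : Fin m) := by simp [Fin.ext_iff, hr0]
        rw [hre, rotMat'_mulVec_zero m (j-1) hj10 hym _ _ hm0,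
          rotMat_mulVec_zero m (j-1) hj10 hym _ _ hm0, hc, hvy, hs0, hsy]
        ring
      · by_cases hrj : (r : ℕ) = j - 1
        · have hre : r = (⟨j-1, hym⟩ : Fin m) := by simp [Fin.ext_iff, hrj]
          rw [hre, rotMat'_mulVec_i m (j-1) hj10 hym _ _ hm0,
            rotMat_mulVec_i m (j-1) hj10 hym _ _ hm0, hc, hvy, hs0, hsy]
          ring
        · have hsr : (Pi.single (⟨j-1, hym⟩ : Fin m) c : Fin m → ℝ) r = 0 :=
            Pi.single_eq_of_ne (M := fun _ => ℝ) (by simp [Fin.ext_iff]; omega) c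
          rw [rotMat'_mulVec_other m (j-1) hj10 hym _ _ r hr0 hrj,
            rotMat_mulVec_other m (j-1) hj10 hym _ _ r hr0 hrj, hsr]
    rw [harg]
  have hunit : IsUnit (Rtheta m θ).det := by
    apply (Matrix.isUnit_iff_isUnit_det _).mp
    rw [Rtheta]
    apply List.prod_isUnit
    intro M hM
    rw [List.mem_map] at hM
    obtain ⟨k, hk, rfl⟩ := hM
    rw [List.mem_range] at hk
    exact isUnit_rotMat m (k+1) (by omega) (by omega) _
  show ((Rtheta m θ)⁻¹ * dRtheta m θ j).mulVec _ = _
  rw [← Matrix.mulVec_mulVec, key, Matrix.mulVec_mulVec,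
    Matrix.nonsing_inv_mul _ hunit, Matrix.one_mulVec]
  exact hsingle.symm
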